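/- QC for the ReLU map in structured matrix form: let φ(x) = max(0, x) componentwise on ℝᵈ, y = φ(x). For any diagonal-plus-Laplacian matrix T = ∑ᵢ λᵢeᵢeᵢᵀ + ∑_{i<j} λᵢⱼ(eᵢ−eⱼ)(eᵢ−eⱼ)ᵀ with λᵢⱼ ≥ 0, any ν, η ∈ ℝᵈ with ν ≥ 0, η ≥ 0, the vector [x; y; 1] satisfies [x; y; 1]ᵀ Q [x; y; 1] ≥ 0 where Q = [[0, T, −ν], [T, −2T, ν+η], [−νᵀ, νᵀ+ηᵀ, 0]]. -/

import Mathlib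

open Matrix

lemma dv_bilin (d : ℕ) (a b : Fin d → ℝ) :
    ∃ L : Matrix (Fin d) (Fin d) ℝ →ₗ[ℝ] ℝ, ∀ M, L M = a ⬝ᵥ (M *ᵥ b) := by
  refine ⟨{ toFun := fun M => a ⬝ᵥ (M *ᵥ b), map_add' := ?_, map_smul' := ?_ }, fun _ => rfl⟩
  · intro M N; rw [Matrix.add_mulVec, dotProduct_add]
  · intro c M; simp only [RingHom.id_apply, smul_eq_mul]
    rw [Matrix.smul_mulVec, dotProduct_smul, smul_eq_mul]

lemma dv_vecMulVec (d : ℕ) (u v a b : Fin d → ℝ) :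
    a ⬝ᵥ (Matrix.vecMulVec u v *ᵥ b) = (a ⬝ᵥ u) * (v ⬝ᵥ b) := by
  have h : Matrix.vecMulVec u v *ᵥ b = (v ⬝ᵥ b) • u := by
    funext i
    simp only [Matrix.mulVec, dotProduct, Matrix.vecMulVec_apply, Pi.smul_apply,
      smul_eq_mul, Finset.sum_mul]
    exact Finset.sum_congr rfl fun j _ => by ring
  rw [h, dotProduct_smul, smul_eq_mul]; ring

lemma dv_single (d : ℕ) (a : Fin d → ℝ) (i : Fin d) : a ⬝ᵥ Pi.single i 1 = a i := by
  simp [dotProduct, Pi.single_apply]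

lemma single_dv (d : ℕ) (b : Fin d → ℝ) (i : Fin d) : Pi.single i (1:ℝ) ⬝ᵥ b = b i := by
  simp [dotProduct, Pi.single_apply]

lemma quadT (d : ℕ) (lam : Fin d → ℝ) (lam' : Fin d → Fin d → ℝ)
    (e : Fin d → (Fin d → ℝ)) (he : ∀ i, e i = Pi.single i 1)
    (T : Matrix (Fin d) (Fin d) ℝ)
    (hT : T = (∑ i, lam i • Matrix.vecMulVec (e i) (e i))
      + ∑ i, ∑ j, (if i < j then lam' i j • Matrix.vecMulVec (e i - e j) (e i - e j) else 0))
    (a b : Fin d → ℝ) :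
    a ⬝ᵥ (T *ᵥ b) = (∑ i, lam i * (a i * b i)) +
      ∑ i, ∑ j, (if i < j then lam' i j * ((a i - a j) * (b i - b j)) else 0) := by
  obtain ⟨L, hL⟩ := dv_bilin d a b
  rw [← hL, hT, map_add, map_sum, map_sum]
  congr 1
  · refine Finset.sum_congr rfl fun i _ => ?_
    rw [_root_.map_smul, hL, dv_vecMulVec, he i, dv_single, single_dv, smul_eq_mul]
  · refine Finset.sum_congr rfl fun i _ => ?_
    rw [map_sum]
    refine Finset.sum_congr rfl fun j _ => ?_
    rw [apply_ite L, map_zero, _root_.map_smul, hL, dv_vecMulVec, he i, he j, smul_eq_mul]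
    rw [dotProduct_sub, sub_dotProduct, dv_single, dv_single, single_dv, single_dv]

theorem relu_qc_structured (d : ℕ) (x y : Fin d → ℝ) (hy : ∀ i, y i = max 0 (x i))
    (lam : Fin d → ℝ) (lam' : Fin d → Fin d → ℝ) (hlam' : ∀ i j, 0 ≤ lam' i j)
    (ν η : Fin d → ℝ) (hν : ∀ i, 0 ≤ ν i) (hη : ∀ i, 0 ≤ η i)
    (e : Fin d → (Fin d → ℝ)) (he : ∀ i, e i = Pi.single i 1)
    (T : Matrix (Fin d) (Fin d) ℝ)
    (hT : T = (∑ i, lam i • Matrix.vecMulVec (e i) (e i))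
      + ∑ i, ∑ j, (if i < j then lam' i j • Matrix.vecMulVec (e i - e j) (e i - e j) else 0))
    (Q : Matrix ((Fin d ⊕ Fin d) ⊕ Unit) ((Fin d ⊕ Fin d) ⊕ Unit) ℝ)
    (hQ : Q = Matrix.fromBlocks
      (Matrix.fromBlocks 0 T T (-(2 : ℝ) • T))
      (Matrix.replicateCol Unit (Sum.elim (-ν) (ν + η)))
      (Matrix.replicateRow Unit (Sum.elim (-ν) (ν + η)))
      0) :
    0 ≤ (Sum.elim (Sum.elim x y) (fun _ => (1 : ℝ))) ⬝ᵥ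
      (Q *ᵥ (Sum.elim (Sum.elim x y) (fun _ => (1 : ℝ)))) := by
  have hy0 : ∀ i, 0 ≤ y i := fun i => (hy i) ▸ le_max_left _ _
  have hxy : ∀ i, x i ≤ y i := fun i => (hy i) ▸ le_max_right _ _
  have hprod : ∀ i, y i * y i = y i * x i := by
    intro i
    rcases le_total (x i) 0 with h | h
    · rw [hy i, max_eq_left h]; ring
    · rw [hy i, max_eq_right h]
  have hslope : ∀ i j, (y i - y j) * (y i - y j) ≤ (x i - x j) * (y i - y j) := by
    intro i j
    nlinarith [mul_nonneg (hy0 i) (sub_nonneg.2 (hxy j)),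
      mul_nonneg (hy0 j) (sub_nonneg.2 (hxy i)), hprod i, hprod j]
  subst hQ
  -- reduce to scalar dot products
  have hcol : (Sum.elim x y) ⬝ᵥ
      (Matrix.replicateCol Unit (Sum.elim (-ν) (ν + η)) *ᵥ fun _ => (1:ℝ)) =
      x ⬝ᵥ (-ν) + y ⬝ᵥ (ν + η) := by
    have h1 : (Matrix.replicateCol Unit (Sum.elim (-ν) (ν + η)) *ᵥ fun _ => (1:ℝ)) =
        Sum.elim (-ν) (ν + η) := by
      funext i
      simp [Matrix.mulVec, dotProduct]
    rw [h1, sumElim_dotProduct_sumElim]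
  have hrow : (fun _ : Unit => (1:ℝ)) ⬝ᵥ
      (Matrix.replicateRow Unit (Sum.elim (-ν) (ν + η)) *ᵥ (Sum.elim x y)) =
      (-ν) ⬝ᵥ x + (ν + η) ⬝ᵥ y := by
    simp only [Matrix.mulVec, dotProduct, Matrix.replicateRow_apply]
    rw [show (Finset.univ : Finset Unit) = {()} from rfl]
    rw [Finset.sum_singleton, one_mul, Fintype.sum_sum_type]
    simp
  rw [Matrix.fromBlocks_mulVec]
  simp only [Sum.elim_comp_inl, Sum.elim_comp_inr, Matrix.fromBlocks_mulVec,
    Matrix.zero_mulVec, zero_add, add_zero, sumElim_dotProduct_sumElim,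
    dotProduct_add, Matrix.smul_mulVec, dotProduct_smul, smul_eq_mul]
  rw [hcol, hrow, quadT d lam lam' e he T hT x y, quadT d lam lam' e he T hT y x,
    quadT d lam lam' e he T hT y y]
  have hA : (∑ i, lam i * (x i * y i)) + (∑ i, lam i * (y i * x i))
      = 2 * ∑ i, lam i * (y i * y i) := by
    rw [Finset.mul_sum, ← Finset.sum_add_distrib]
    refine Finset.sum_congr rfl fun i _ => ?_
    linear_combination (-2 * lam i) * hprod i
  have hcomm : (∑ i, ∑ j, (if i < j then lam' i j * ((y i - y j) * (x i - x j)) else 0))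
      = ∑ i, ∑ j, (if i < j then lam' i j * ((x i - x j) * (y i - y j)) else 0) := by
    refine Finset.sum_congr rfl fun i _ => Finset.sum_congr rfl fun j _ => ?_
    congr 1; ring
  have hBq : (∑ i, ∑ j, (if i < j then lam' i j * ((y i - y j) * (y i - y j)) else 0))
      ≤ ∑ i, ∑ j, (if i < j then lam' i j * ((x i - x j) * (y i - y j)) else 0) := by
    refine Finset.sum_le_sum fun i _ => Finset.sum_le_sum fun j _ => ?_
    split
    · exact mul_le_mul_of_nonneg_left (hslope i j) (hlam' i j)
    · exact le_refl 0
  have hC : 0 ≤ x ⬝ᵥ (-ν) + y ⬝ᵥ (ν + η) := by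
    simp only [dotProduct, Pi.neg_apply, Pi.add_apply, ← Finset.sum_add_distrib]
    refine Finset.sum_nonneg fun i _ => ?_
    nlinarith [mul_nonneg (hν i) (sub_nonneg.2 (hxy i)), mul_nonneg (hη i) (hy0 i)]
  have hC2 : 0 ≤ (-ν) ⬝ᵥ x + (ν + η) ⬝ᵥ y := by
    simp only [dotProduct, Pi.neg_apply, Pi.add_apply, ← Finset.sum_add_distrib]
    refine Finset.sum_nonneg fun i _ => ?_
    nlinarith [mul_nonneg (hν i) (sub_nonneg.2 (hxy i)), mul_nonneg (hη i) (hy0 i)]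
  linarith [hA, hcomm, hBq, hC, hC2]
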